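/- The ideal J is invariant under each of the maps K, K⁻¹, A_L, B_L, A_R, B_R, A*_ℓ, B*_ℓ, A*_r, B*_r. Moreover, the map A_L³B_L − [3]_q A_L²B_L A_L + [3]_q A_L B_L A_L² − B_L A_L³ sends V into J (so the q-Serre relation for A_L, B_L holds on the quotient V/J), and likewise with the pair (A_L, B_L) replaced by (B_L, A_L), by (A_R, B_R), and by (B_R, A_R). -/

import Mathlib

noncomputable section
namespace SqPaper

/-- The two letters: `0 ↦ A`, `1 ↦ B`. -/
abbrev Ltr := Fin 2
def lA : Ltr := 0
def lB : Ltr := 1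

/-- The pairing `⟨ , ⟩` on letters: `⟨A,A⟩=⟨B,B⟩=2`, `⟨A,B⟩=⟨B,A⟩=-2`. -/
def brk (x y : Ltr) : ℤ := if x = y then 2 else -2

variable (F : Type*) [Field F]

/-- The free algebra `V` on the two generators, realized as the monoid algebra of the
free monoid on two letters; the words form the standard basis. -/
abbrev FA := MonoidAlgebra F (FreeMonoid Ltr)

/-- The standard basis vector attached to a word (list of letters). -/
def wd (l : List Ltr) : FA F := MonoidAlgebra.single (FreeMonoid.ofList l) 1

def Agen : FA F := wd F [lA]
def Bgen : FA F := wd F [lB]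

/-- View an element of `V` as a finitely supported function on words. -/
def fsp (v : FA F) : FreeMonoid Ltr →₀ F := v.coeff

/-- The symmetric bilinear form on `V` for which the standard basis of words is orthonormal. -/
def form (u v : FA F) : F := (fsp F u).sum fun w c => c * (fsp F v) w

/-- Extend a function on words to an `F`-linear map on `V`. -/
def mkMap {M : Type*} [AddCommMonoid M] [Module F M] (f : List Ltr → M) :
    FA F →ₗ[F] M :=
  (Finsupp.lsum F fun w => LinearMap.toSpanSingleton F M (f (FreeMonoid.toList w))) ∘ₗ
    (MonoidAlgebra.coeffLinearEquiv F).toLinearMap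

/-- `[3]_q = (q³ - q⁻³)/(q - q⁻¹)`. -/
def tri (q : F) : F := (q ^ 3 - q⁻¹ ^ 3) / (q - q⁻¹)

/-- The q-shuffle product on words. -/
def shufW (q : F) : List Ltr → List Ltr → FA F
  | [], v => wd F v
  | u, [] => wd F u
  | a :: u, b :: v =>
      wd F [a] * shufW q u (b :: v) +
        (q ^ (((a :: u).map (fun x => brk x b)).sum)) • (wd F [b] * shufW q (a :: u) v)
  termination_by u v => u.length + v.length

/-- The q-shuffle product `⋆` on `V`, as a bilinear map. -/
def qshuf (q : F) : FA F →ₗ[F] FA F →ₗ[F] FA F :=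
  mkMap F fun u => mkMap F fun v => shufW F q u v

/-- Iterated `⋆`-product of the letters of a word. -/
def thetaW (q : F) : List Ltr → FA F
  | [] => 1
  | a :: t => qshuf F q (wd F [a]) (thetaW q t)

/-- `θ : V → V`, the algebra homomorphism from the free algebra to the q-shuffle algebra
with `θ(A) = A`, `θ(B) = B`. -/
def theta (q : F) : FA F →ₗ[F] FA F := mkMap F fun l => thetaW F q l

/-- `A_L`, left multiplication by `A` in the free algebra. -/
def AL : FA F →ₗ[F] FA F := LinearMap.mulLeft F (Agen F)
def BL : FA F →ₗ[F] FA F := LinearMap.mulLeft F (Bgen F)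
def AR : FA F →ₗ[F] FA F := LinearMap.mulRight F (Agen F)
def BR : FA F →ₗ[F] FA F := LinearMap.mulRight F (Bgen F)

/-- `X*_L` (for the letter `x`): deletes the letter `x` from the front of a word. -/
def delL (x : Ltr) : FA F →ₗ[F] FA F :=
  mkMap F fun l => if l.head? = some x then wd F l.tail else 0

/-- `X*_R` (for the letter `x`): deletes the letter `x` from the end of a word. -/
def delR (x : Ltr) : FA F →ₗ[F] FA F :=
  mkMap F fun l => if l.getLast? = some x then wd F l.dropLast else 0

/-- `X_ℓ`: left q-shuffle multiplication by the letter `x`. -/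
def shL (q : F) (x : Ltr) : FA F →ₗ[F] FA F := qshuf F q (wd F [x])

/-- `X_r`: right q-shuffle multiplication by the letter `x`. -/
def shR (q : F) (x : Ltr) : FA F →ₗ[F] FA F := (qshuf F q).flip (wd F [x])

/-- `X*_ℓ`: the weighted deletion map, deleting an occurrence of the letter `x`
with weight `q^{⟨v₁,x⟩+⋯+⟨v_{i-1},x⟩}`. -/
def lowL (q : F) (x : Ltr) : FA F →ₗ[F] FA F :=
  mkMap F fun l =>
    ∑ i ∈ Finset.range l.length,
      if l[i]? = some x then
        (q ^ (((l.take i).map (fun y => brk y x)).sum)) • wd F (l.eraseIdx i)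
      else 0

/-- `X*_r`: the weighted deletion map, deleting an occurrence of the letter `x`
with weight `q^{⟨vₙ,x⟩+⋯+⟨v_{i+1},x⟩}`. -/
def lowR (q : F) (x : Ltr) : FA F →ₗ[F] FA F :=
  mkMap F fun l =>
    ∑ i ∈ Finset.range l.length,
      if l[i]? = some x then
        (q ^ (((l.drop (i + 1)).map (fun y => brk y x)).sum)) • wd F (l.eraseIdx i)
      else 0

/-- `K`, the algebra automorphism of the free algebra `V` with `K(A) = q²A`, `K(B) = q⁻²B`;
on a word `v = v₁⋯vₙ` it acts as `K(v) = v·q^{⟨v₁,A⟩+⋯+⟨vₙ,A⟩}`. -/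
def Kop (q : F) : FA F →ₗ[F] FA F :=
  mkMap F fun l => (q ^ ((l.map (fun y => brk y lA)).sum)) • wd F l

/-- `K⁻¹`; on a word `v = v₁⋯vₙ` it acts as `K⁻¹(v) = v·q^{⟨v₁,B⟩+⋯+⟨vₙ,B⟩}`. -/
def Kinv (q : F) : FA F →ₗ[F] FA F :=
  mkMap F fun l => (q ^ ((l.map (fun y => brk y lB)).sum)) • wd F l

/-- `T`, the automorphism of the free algebra swapping `A` and `B`. -/
def Top : FA F →ₗ[F] FA F :=
  mkMap F fun l => wd F (l.map (fun x => if x = lA then lB else lA))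

/-- `Â = Q(A_L − K B_R)` and `B̂ = Q(B_L − K⁻¹ A_R)` where `Q = 1 - q²`. -/
def hatOp (q : F) (a : Ltr) : FA F →ₗ[F] FA F :=
  if a = lA then (1 - q ^ 2) • (AL F - Kop F q ∘ₗ BR F)
  else (1 - q ^ 2) • (BL F - Kinv F q ∘ₗ AR F)

def phiW (q : F) : List Ltr → FA F
  | [] => 1
  | a :: t => hatOp F q a (phiW q t)

/-- The map `φ`: `φ(1) = 1` and `φ(v₁⋯vₙ) = v̂₁v̂₂⋯v̂ₙ(1)`. -/
def phi (q : F) : FA F →ₗ[F] FA F := mkMap F fun l => phiW F q l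

/-- `ψ = K B_R A*_L + K⁻¹ A_R B*_L`. -/
def psi (q : F) : FA F →ₗ[F] FA F :=
  Kop F q ∘ₗ BR F ∘ₗ delL F lA + Kinv F q ∘ₗ AR F ∘ₗ delL F lB

/-- `V_n`, the span of the words of length `n`. -/
def Vn (n : ℕ) : Submodule F (FA F) :=
  Submodule.span F { x | ∃ l : List Ltr, l.length = n ∧ x = wd F l }

/-- `J⁺ = A³B − [3]_q A²BA + [3]_q ABA² − BA³`. -/
def Jp (q : F) : FA F :=
  Agen F ^ 3 * Bgen F - tri F q • (Agen F ^ 2 * Bgen F * Agen F)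
    + tri F q • (Agen F * Bgen F * Agen F ^ 2) - Bgen F * Agen F ^ 3

/-- `J⁻ = B³A − [3]_q B²AB + [3]_q BAB² − AB³`. -/
def Jm (q : F) : FA F :=
  Bgen F ^ 3 * Agen F - tri F q • (Bgen F ^ 2 * Agen F * Bgen F)
    + tri F q • (Bgen F * Agen F * Bgen F ^ 2) - Agen F * Bgen F ^ 3

/-- `J`, the two-sided ideal of the free algebra generated by `J⁺` and `J⁻`
(realized as the `F`-span of the elements `a·J^±·b`). -/
def Jsub (q : F) : Submodule F (FA F) :=
  Submodule.span F { x | ∃ a b : FA F, x = a * Jp F q * b ∨ x = a * Jm F q * b }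

/-- `U`, the subalgebra of the q-shuffle algebra `(V,⋆)` generated by `A` and `B`,
realized as the span of all `⋆`-products of the letters. -/
def Usub (q : F) : Submodule F (FA F) :=
  Submodule.span F (Set.range fun l : List Ltr => thetaW F q l)

/-- A `□_q`-module structure on an `F`-vector space `M`: four operators
`x₀, x₁, x₂, x₃` (indices mod 4) satisfying the q-Weyl and q-Serre relations. -/
structure SqAct (q : F) (M : Type*) [AddCommGroup M] [Module F M] where
  x : ZMod 4 → Module.End F M
  weyl : ∀ i : ZMod 4,
    q • (x i * x (i + 1)) - q⁻¹ • (x (i + 1) * x i) = (q - q⁻¹) • (1 : Module.End F M)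
  serre : ∀ i : ZMod 4,
    x i ^ 3 * x (i + 2) - tri F q • (x i ^ 2 * x (i + 2) * x i)
      + tri F q • (x i * x (i + 2) * x i ^ 2) - x (i + 2) * x i ^ 3 = 0

variable {F} {q : F} {M : Type*} [AddCommGroup M] [Module F M]

/-- A `□_q`-module `M` is generated by `ξ` if no proper submodule
(subspace invariant under all the `xᵢ`) contains `ξ`. -/
def SqAct.Gen (S : SqAct F q M) (ξ : M) : Prop :=
  ∀ W : Submodule F M, (∀ i : ZMod 4, ∀ m ∈ W, S.x i m ∈ W) → ξ ∈ W → W = ⊤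

/-- `W_n`: the span of the vectors `u₁u₂⋯uₙ·ξ` with each `uᵢ ∈ {x₀, x₂}`. -/
def SqAct.Wn (S : SqAct F q M) (ξ : M) (n : ℕ) : Submodule F M :=
  Submodule.span F
    { m | ∃ l : List (ZMod 4), l.length = n ∧ (∀ i ∈ l, i = 0 ∨ i = 2) ∧
        m = l.foldr (fun i acc => S.x i acc) ξ }

/-! ### Auxiliary lemmas -/

section Aux

lemma wd_mul (l m : List Ltr) : wd F l * wd F m = wd F (l ++ m) := by
  simp only [wd, MonoidAlgebra.single_mul_single, one_mul]
  rfl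

lemma mkMap_wd {M : Type*} [AddCommMonoid M] [Module F M] (f : List Ltr → M) (l : List Ltr) :
    mkMap F f (wd F l) = f l := by
  show Finsupp.lsum F (fun w => LinearMap.toSpanSingleton F M (f (FreeMonoid.toList w))) (Finsupp.single (FreeMonoid.ofList l) 1) = f l
  rw [Finsupp.lsum_single, LinearMap.toSpanSingleton_apply, one_smul, FreeMonoid.toList_ofList]

lemma single_eq_smul_wd (a : FreeMonoid Ltr) (b : F) :
    (MonoidAlgebra.single a b : FA F) = b • wd F a.toList := by
  rw [wd, MonoidAlgebra.smul_single', mul_one, FreeMonoid.ofList_toList]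

lemma lhom_ext_wd {M : Type*} [AddCommMonoid M] [Module F M] {T S : FA F →ₗ[F] M}
    (h : ∀ l, T (wd F l) = S (wd F l)) : T = S := by
  refine MonoidAlgebra.lhom_ext' fun a => LinearMap.ext fun b =>
    show T (MonoidAlgebra.single a b) = S (MonoidAlgebra.single a b) from ?_
  rw [show (MonoidAlgebra.single a b : FA F) = b • wd F a.toList from single_eq_smul_wd a b,
    map_smul, map_smul]
  exact congrArg (b • ·) (h a.toList)

lemma ext_wd₂ {T S : FA F →ₗ[F] FA F →ₗ[F] FA F}
    (h : ∀ l m, T (wd F l) (wd F m) = S (wd F l) (wd F m)) : T = S :=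
  lhom_ext_wd fun l => lhom_ext_wd fun m => h l m

/-- weight of a word relative to a letter -/
abbrev wtl (x : Ltr) (l : List Ltr) : ℤ := (l.map (fun y => brk y x)).sum

lemma wtl_append (x : Ltr) (l m : List Ltr) : wtl x (l ++ m) = wtl x l + wtl x m := by
  simp [wtl]

/-- The scaling operator `σ_x`; `σ_A = K`, `σ_B = K⁻¹`. -/
def sg (q : F) (x : Ltr) : FA F →ₗ[F] FA F := mkMap F fun l => (q ^ wtl x l) • wd F l

lemma Kop_eq_sg : Kop F q = sg q lA := rfl
lemma Kinv_eq_sg : Kinv F q = sg q lB := rfl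

lemma sg_wd (x : Ltr) (l : List Ltr) : sg q x (wd F l) = (q ^ wtl x l) • wd F l :=
  mkMap_wd _ _

lemma sg_mul (hq : q ≠ 0) (x : Ltr) (u v : FA F) :
    sg q x (u * v) = sg q x u * sg q x v := by
  have key : (LinearMap.mul F (FA F)).compr₂ (sg q x)
      = (LinearMap.mul F (FA F)).compl₁₂ (sg q x) (sg q x) := by
    refine ext_wd₂ fun l m => ?_
    simp only [LinearMap.compr₂_apply, LinearMap.compl₁₂_apply, LinearMap.mul_apply']
    rw [wd_mul, sg_wd, sg_wd, sg_wd, smul_mul_smul_comm, wd_mul, wtl_append, zpow_add₀ hq]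
  simpa using LinearMap.congr_fun₂ key u v

lemma lowL_wd (x : Ltr) (l : List Ltr) :
    lowL F q x (wd F l) =
      ∑ i ∈ Finset.range l.length,
        if l[i]? = some x then (q ^ wtl x (l.take i)) • wd F (l.eraseIdx i) else 0 :=
  mkMap_wd _ _

lemma lowR_wd (x : Ltr) (l : List Ltr) :
    lowR F q x (wd F l) =
      ∑ i ∈ Finset.range l.length,
        if l[i]? = some x then (q ^ wtl x (l.drop (i + 1))) • wd F (l.eraseIdx i) else 0 :=
  mkMap_wd _ _

lemma lowL_mul (hq : q ≠ 0) (x : Ltr) (u v : FA F) :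
    lowL F q x (u * v) = lowL F q x u * v + sg q x u * lowL F q x v := by
  have key : (LinearMap.mul F (FA F)).compr₂ (lowL F q x)
      = (LinearMap.mul F (FA F)).compl₁₂ (lowL F q x) LinearMap.id
        + (LinearMap.mul F (FA F)).compl₁₂ (sg q x) (lowL F q x) := by
    refine ext_wd₂ fun l m => ?_
    simp only [LinearMap.compr₂_apply, LinearMap.compl₁₂_apply, LinearMap.mul_apply',
      LinearMap.add_apply, LinearMap.id_apply]
    rw [wd_mul, lowL_wd, lowL_wd, lowL_wd, sg_wd, List.length_append, Finset.sum_range_add]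
    congr 1
    · rw [Finset.sum_mul]
      refine Finset.sum_congr rfl fun i hi => ?_
      rw [Finset.mem_range] at hi
      rw [List.getElem?_append_left hi, List.take_append_of_le_length hi.le,
        List.eraseIdx_append_of_lt_length hi]
      split
      · rw [smul_mul_assoc, wd_mul]
      · rw [zero_mul]
    · rw [Finset.mul_sum]
      refine Finset.sum_congr rfl fun j hj => ?_
      rw [List.getElem?_append_right (Nat.le_add_right _ _), Nat.add_sub_cancel_left,
        List.take_append, List.eraseIdx_append_of_length_le (Nat.le_add_right _ _),
        Nat.add_sub_cancel_left]
      split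
      · rw [List.take_of_length_le (Nat.le_add_right _ _), wtl_append, zpow_add₀ hq, ← wd_mul, mul_smul, smul_mul_assoc, mul_smul_comm]
      · rw [mul_zero]
  simpa using LinearMap.congr_fun₂ key u v

lemma lowR_mul (hq : q ≠ 0) (x : Ltr) (u v : FA F) :
    lowR F q x (u * v) = lowR F q x u * sg q x v + u * lowR F q x v := by
  have key : (LinearMap.mul F (FA F)).compr₂ (lowR F q x)
      = (LinearMap.mul F (FA F)).compl₁₂ (lowR F q x) (sg q x)
        + (LinearMap.mul F (FA F)).compl₁₂ LinearMap.id (lowR F q x) := by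
    refine ext_wd₂ fun l m => ?_
    simp only [LinearMap.compr₂_apply, LinearMap.compl₁₂_apply, LinearMap.mul_apply',
      LinearMap.add_apply, LinearMap.id_apply]
    rw [wd_mul, lowR_wd, lowR_wd, lowR_wd, sg_wd, List.length_append, Finset.sum_range_add]
    congr 1
    · rw [mul_smul_comm, Finset.sum_mul, Finset.smul_sum]
      refine Finset.sum_congr rfl fun i hi => ?_
      rw [Finset.mem_range] at hi
      rw [List.getElem?_append_left hi,
        List.drop_append_of_le_length (Nat.succ_le_of_lt hi),
        List.eraseIdx_append_of_lt_length hi]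
      split
      · rw [wtl_append, zpow_add₀ hq, smul_mul_assoc, smul_smul, ← wd_mul, mul_comm (q ^ _),
          mul_smul]
      · rw [zero_mul, smul_zero]
    · rw [Finset.mul_sum]
      refine Finset.sum_congr rfl fun j hj => ?_
      have h1 : l.length + j + 1 = l.length + (j + 1) := by omega
      rw [List.getElem?_append_right (Nat.le_add_right _ _), Nat.add_sub_cancel_left,
        h1, List.drop_append, List.eraseIdx_append_of_length_le (Nat.le_add_right _ _),
        Nat.add_sub_cancel_left]
      split
      · rw [List.drop_of_length_le (Nat.le_add_right _ _), List.nil_append, Nat.add_sub_cancel_left,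
          mul_smul_comm, wd_mul]
      · rw [mul_zero]
  simpa using LinearMap.congr_fun₂ key u v

end Aux

section Aux2

lemma Jp_eq : Jp F q = wd F [lA,lA,lA,lB] - tri F q • wd F [lA,lA,lB,lA]
    + tri F q • wd F [lA,lB,lA,lA] - wd F [lB,lA,lA,lA] := by
  simp [Jp, Agen, Bgen, pow_succ, wd_mul]

lemma Jm_eq : Jm F q = wd F [lB,lB,lB,lA] - tri F q • wd F [lB,lB,lA,lB]
    + tri F q • wd F [lB,lA,lB,lB] - wd F [lA,lB,lB,lB] := by
  simp [Jm, Agen, Bgen, pow_succ, wd_mul]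

lemma tri_eq (hq : q ≠ 0) (h2 : q - q⁻¹ ≠ 0) : tri F q = q^2 + 1 + (q⁻¹)^2 := by
  rw [tri, div_eq_iff h2]
  field_simp
  ring

lemma sg_Jp (hq : q ≠ 0) (x : Ltr) :
    sg q x (Jp F q) = (q ^ (if x = lA then (4:ℤ) else -4)) • Jp F q := by
  rw [Jp_eq, map_sub, map_add, map_sub, map_smul, map_smul, sg_wd, sg_wd, sg_wd, sg_wd]
  fin_cases x <;> simp [wtl, brk, lA, lB] <;> module

lemma sg_Jm (hq : q ≠ 0) (x : Ltr) :
    sg q x (Jm F q) = (q ^ (if x = lA then (-4:ℤ) else 4)) • Jm F q := by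
  rw [Jm_eq, map_sub, map_add, map_sub, map_smul, map_smul, sg_wd, sg_wd, sg_wd, sg_wd]
  fin_cases x <;> simp [wtl, brk, lA, lB] <;> module

lemma lowL_Jp_zero (hq : q ≠ 0) (h2 : q - q⁻¹ ≠ 0) (x : Ltr) :
    lowL F q x (Jp F q) = 0 := by
  have ht := tri_eq hq h2
  rw [Jp_eq, map_sub, map_add, map_sub, map_smul, map_smul,
    lowL_wd, lowL_wd, lowL_wd, lowL_wd]
  fin_cases x <;>
  · simp [wtl, brk, lA, lB, Finset.sum_range_succ, ht, zpow_neg, zpow_ofNat]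
    clear ht h2
    match_scalars
    all_goals (first | ring1 | (field_simp; ring1) | (field_simp; rw [sub_eq_zero, div_eq_one_iff_eq (by simp [hq])]; ring1))

lemma lowL_Jm_zero (hq : q ≠ 0) (h2 : q - q⁻¹ ≠ 0) (x : Ltr) :
    lowL F q x (Jm F q) = 0 := by
  have ht := tri_eq hq h2
  rw [Jm_eq, map_sub, map_add, map_sub, map_smul, map_smul,
    lowL_wd, lowL_wd, lowL_wd, lowL_wd]
  fin_cases x <;>
  · simp [wtl, brk, lA, lB, Finset.sum_range_succ, ht, zpow_neg, zpow_ofNat]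
    clear ht h2
    match_scalars
    all_goals (first | ring1 | (field_simp; ring1) | (field_simp; rw [sub_eq_zero, div_eq_one_iff_eq (by simp [hq])]; ring1))

lemma lowR_Jp_zero (hq : q ≠ 0) (h2 : q - q⁻¹ ≠ 0) (x : Ltr) :
    lowR F q x (Jp F q) = 0 := by
  have ht := tri_eq hq h2
  rw [Jp_eq, map_sub, map_add, map_sub, map_smul, map_smul,
    lowR_wd, lowR_wd, lowR_wd, lowR_wd]
  fin_cases x <;>
  · simp [wtl, brk, lA, lB, Finset.sum_range_succ, ht, zpow_neg, zpow_ofNat]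
    clear ht h2
    match_scalars
    all_goals (first | ring1 | (field_simp; ring1) | (field_simp; rw [sub_eq_zero, div_eq_one_iff_eq (by simp [hq])]; ring1))

lemma lowR_Jm_zero (hq : q ≠ 0) (h2 : q - q⁻¹ ≠ 0) (x : Ltr) :
    lowR F q x (Jm F q) = 0 := by
  have ht := tri_eq hq h2
  rw [Jm_eq, map_sub, map_add, map_sub, map_smul, map_smul,
    lowR_wd, lowR_wd, lowR_wd, lowR_wd]
  fin_cases x <;>
  · simp [wtl, brk, lA, lB, Finset.sum_range_succ, ht, zpow_neg, zpow_ofNat]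
    clear ht h2
    match_scalars
    all_goals (first | ring1 | (field_simp; ring1) | (field_simp; rw [sub_eq_zero, div_eq_one_iff_eq (by simp [hq])]; ring1))

lemma Jp_mem (a b : FA F) : a * Jp F q * b ∈ Jsub F q :=
  Submodule.subset_span ⟨a, b, Or.inl rfl⟩

lemma Jm_mem (a b : FA F) : a * Jm F q * b ∈ Jsub F q :=
  Submodule.subset_span ⟨a, b, Or.inr rfl⟩

lemma Jsub_map (T : FA F →ₗ[F] FA F)
    (h : ∀ a b : FA F, T (a * Jp F q * b) ∈ Jsub F q ∧ T (a * Jm F q * b) ∈ Jsub F q) :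
    ∀ v ∈ Jsub F q, T v ∈ Jsub F q := by
  intro v hv
  induction hv using Submodule.span_induction with
  | mem y hy =>
      obtain ⟨a, b, hab | hab⟩ := hy
      · rw [hab]; exact (h a b).1
      · rw [hab]; exact (h a b).2
  | zero => rw [map_zero]; exact zero_mem _
  | add a b _ _ ha hb => rw [map_add]; exact add_mem ha hb
  | smul c a _ ha => rw [map_smul]; exact Submodule.smul_mem _ _ ha

lemma sg_Jsub (hq : q ≠ 0) (x : Ltr) : ∀ v ∈ Jsub F q, sg q x v ∈ Jsub F q := by
  refine Jsub_map _ fun a b => ⟨?_, ?_⟩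
  · rw [sg_mul hq, sg_mul hq, sg_Jp hq, mul_smul_comm, smul_mul_assoc]
    exact Submodule.smul_mem _ _ (Jp_mem _ _)
  · rw [sg_mul hq, sg_mul hq, sg_Jm hq, mul_smul_comm, smul_mul_assoc]
    exact Submodule.smul_mem _ _ (Jm_mem _ _)

lemma lowL_Jsub (hq : q ≠ 0) (h2 : q - q⁻¹ ≠ 0) (x : Ltr) :
    ∀ v ∈ Jsub F q, lowL F q x v ∈ Jsub F q := by
  refine Jsub_map _ fun a b => ⟨?_, ?_⟩
  · rw [lowL_mul hq, lowL_mul hq, lowL_Jp_zero hq h2, mul_zero, add_zero,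
      sg_mul hq, sg_Jp hq, mul_smul_comm, smul_mul_assoc]
    exact add_mem (Jp_mem _ _) (Submodule.smul_mem _ _ (Jp_mem _ _))
  · rw [lowL_mul hq, lowL_mul hq, lowL_Jm_zero hq h2, mul_zero, add_zero,
      sg_mul hq, sg_Jm hq, mul_smul_comm, smul_mul_assoc]
    exact add_mem (Jm_mem _ _) (Submodule.smul_mem _ _ (Jm_mem _ _))

lemma lowR_Jsub (hq : q ≠ 0) (h2 : q - q⁻¹ ≠ 0) (x : Ltr) :
    ∀ v ∈ Jsub F q, lowR F q x v ∈ Jsub F q := by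
  refine Jsub_map _ fun a b => ⟨?_, ?_⟩
  · rw [lowR_mul hq, lowR_mul hq, lowR_Jp_zero hq h2, mul_zero, add_zero,
      sg_Jp hq, mul_smul_comm, smul_mul_assoc]
    exact add_mem (Submodule.smul_mem _ _ (Jp_mem _ _)) (Jp_mem _ _)
  · rw [lowR_mul hq, lowR_mul hq, lowR_Jm_zero hq h2, mul_zero, add_zero,
      sg_Jm hq, mul_smul_comm, smul_mul_assoc]
    exact add_mem (Submodule.smul_mem _ _ (Jm_mem _ _)) (Jm_mem _ _)

end Aux2

section Aux3

lemma AL_apply (v : FA F) : AL F v = Agen F * v := rfl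
lemma BL_apply (v : FA F) : BL F v = Bgen F * v := rfl
lemma AR_apply (v : FA F) : AR F v = v * Agen F := rfl
lemma BR_apply (v : FA F) : BR F v = v * Bgen F := rfl

lemma serre_AL (v : FA F) :
    (AL F ∘ₗ AL F ∘ₗ AL F ∘ₗ BL F - tri F q • (AL F ∘ₗ AL F ∘ₗ BL F ∘ₗ AL F)
      + tri F q • (AL F ∘ₗ BL F ∘ₗ AL F ∘ₗ AL F) - BL F ∘ₗ AL F ∘ₗ AL F ∘ₗ AL F) v
      = Jp F q * v := by
  simp [AL_apply, BL_apply, Jp, sub_mul, add_mul, smul_mul_assoc, mul_assoc, pow_succ]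

lemma serre_BL (v : FA F) :
    (BL F ∘ₗ BL F ∘ₗ BL F ∘ₗ AL F - tri F q • (BL F ∘ₗ BL F ∘ₗ AL F ∘ₗ BL F)
      + tri F q • (BL F ∘ₗ AL F ∘ₗ BL F ∘ₗ BL F) - AL F ∘ₗ BL F ∘ₗ BL F ∘ₗ BL F) v
      = Jm F q * v := by
  simp [AL_apply, BL_apply, Jm, sub_mul, add_mul, smul_mul_assoc, mul_assoc, pow_succ]

lemma serre_AR (v : FA F) :
    (AR F ∘ₗ AR F ∘ₗ AR F ∘ₗ BR F - tri F q • (AR F ∘ₗ AR F ∘ₗ BR F ∘ₗ AR F)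
      + tri F q • (AR F ∘ₗ BR F ∘ₗ AR F ∘ₗ AR F) - BR F ∘ₗ AR F ∘ₗ AR F ∘ₗ AR F) v
      = -(v * Jp F q) := by
  simp only [LinearMap.sub_apply, LinearMap.add_apply, LinearMap.smul_apply,
    LinearMap.comp_apply, AR_apply, BR_apply, Jp, mul_sub, mul_add, mul_smul_comm,
    mul_assoc, pow_succ, pow_zero, one_mul]
  abel

lemma serre_BR (v : FA F) :
    (BR F ∘ₗ BR F ∘ₗ BR F ∘ₗ AR F - tri F q • (BR F ∘ₗ BR F ∘ₗ AR F ∘ₗ BR F)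
      + tri F q • (BR F ∘ₗ AR F ∘ₗ BR F ∘ₗ BR F) - AR F ∘ₗ BR F ∘ₗ BR F ∘ₗ BR F) v
      = -(v * Jm F q) := by
  simp only [LinearMap.sub_apply, LinearMap.add_apply, LinearMap.smul_apply,
    LinearMap.comp_apply, AR_apply, BR_apply, Jm, mul_sub, mul_add, mul_smul_comm,
    mul_assoc, pow_succ, pow_zero, one_mul]
  abel

end Aux3

end SqPaper
open SqPaper in
/-- `J` is invariant under `K, K⁻¹, A_L, B_L, A_R, B_R, A*_ℓ, B*_ℓ, A*_r, B*_r`,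
and the q-Serre maps for `A_L, B_L, A_R, B_R` send `V` into `J`. -/
theorem J_invariant_and_qSerre (F : Type*) [Field F] (q : F) (hq : q ≠ 0)
    (hq1 : ∀ k : ℕ, 0 < k → q ^ k ≠ 1) :
    (∀ v ∈ Jsub F q, Kop F q v ∈ Jsub F q) ∧
    (∀ v ∈ Jsub F q, Kinv F q v ∈ Jsub F q) ∧
    (∀ v ∈ Jsub F q, AL F v ∈ Jsub F q) ∧
    (∀ v ∈ Jsub F q, BL F v ∈ Jsub F q) ∧
    (∀ v ∈ Jsub F q, AR F v ∈ Jsub F q) ∧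
    (∀ v ∈ Jsub F q, BR F v ∈ Jsub F q) ∧
    (∀ v ∈ Jsub F q, lowL F q lA v ∈ Jsub F q) ∧
    (∀ v ∈ Jsub F q, lowL F q lB v ∈ Jsub F q) ∧
    (∀ v ∈ Jsub F q, lowR F q lA v ∈ Jsub F q) ∧
    (∀ v ∈ Jsub F q, lowR F q lB v ∈ Jsub F q) ∧
    (∀ v : FA F,
      (AL F ∘ₗ AL F ∘ₗ AL F ∘ₗ BL F - tri F q • (AL F ∘ₗ AL F ∘ₗ BL F ∘ₗ AL F)
        + tri F q • (AL F ∘ₗ BL F ∘ₗ AL F ∘ₗ AL F) - BL F ∘ₗ AL F ∘ₗ AL F ∘ₗ AL F) v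
        ∈ Jsub F q) ∧
    (∀ v : FA F,
      (BL F ∘ₗ BL F ∘ₗ BL F ∘ₗ AL F - tri F q • (BL F ∘ₗ BL F ∘ₗ AL F ∘ₗ BL F)
        + tri F q • (BL F ∘ₗ AL F ∘ₗ BL F ∘ₗ BL F) - AL F ∘ₗ BL F ∘ₗ BL F ∘ₗ BL F) v
        ∈ Jsub F q) ∧
    (∀ v : FA F,
      (AR F ∘ₗ AR F ∘ₗ AR F ∘ₗ BR F - tri F q • (AR F ∘ₗ AR F ∘ₗ BR F ∘ₗ AR F)
        + tri F q • (AR F ∘ₗ BR F ∘ₗ AR F ∘ₗ AR F) - BR F ∘ₗ AR F ∘ₗ AR F ∘ₗ AR F) v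
        ∈ Jsub F q) ∧
    (∀ v : FA F,
      (BR F ∘ₗ BR F ∘ₗ BR F ∘ₗ AR F - tri F q • (BR F ∘ₗ BR F ∘ₗ AR F ∘ₗ BR F)
        + tri F q • (BR F ∘ₗ AR F ∘ₗ BR F ∘ₗ BR F) - AR F ∘ₗ BR F ∘ₗ BR F ∘ₗ BR F) v
        ∈ Jsub F q) := by
  have h2 : q - q⁻¹ ≠ 0 := by
    rw [sub_ne_zero]
    intro h
    apply hq1 2 (by norm_num)
    rw [pow_two]
    nth_rewrite 2 [h]
    exact mul_inv_cancel₀ hq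
  have hK := sg_Jsub (q := q) hq
  have hL := lowL_Jsub (q := q) hq h2
  have hR := lowR_Jsub (q := q) hq h2
  refine ⟨fun v hv => ?_, fun v hv => ?_, ?_, ?_, ?_, ?_,
    hL lA, hL lB, hR lA, hR lB, fun v => ?_, fun v => ?_, fun v => ?_, fun v => ?_⟩
  · rw [Kop_eq_sg]; exact hK lA v hv
  · rw [Kinv_eq_sg]; exact hK lB v hv
  · refine Jsub_map (AL F) fun a b => ⟨?_, ?_⟩ <;>
    · rw [AL_apply, ← mul_assoc, ← mul_assoc]
      first | with_reducible exact Jp_mem _ _ | with_reducible exact Jm_mem _ _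
  · refine Jsub_map (BL F) fun a b => ⟨?_, ?_⟩ <;>
    · rw [BL_apply, ← mul_assoc, ← mul_assoc]
      first | with_reducible exact Jp_mem _ _ | with_reducible exact Jm_mem _ _
  · refine Jsub_map (AR F) fun a b => ⟨?_, ?_⟩ <;>
    · rw [AR_apply, mul_assoc]
      first | with_reducible exact Jp_mem _ _ | with_reducible exact Jm_mem _ _
  · refine Jsub_map (BR F) fun a b => ⟨?_, ?_⟩ <;>
    · rw [BR_apply, mul_assoc]
      first | with_reducible exact Jp_mem _ _ | with_reducible exact Jm_mem _ _
  · rw [serre_AL]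
    simpa using Jp_mem 1 v
  · rw [serre_BL]
    simpa using Jm_mem 1 v
  · rw [serre_AR]
    exact neg_mem (by simpa using Jp_mem v 1)
  · rw [serre_BR]
    exact neg_mem (by simpa using Jm_mem v 1)
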